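/- arXiv:2211.10703 — 2 statements merged into one kernel-verified Lean document; each statement's English description precedes it below -/
import Mathlib

section
/- Let $\mathcal{H}_u$ be a real separable Hilbert space, $H : \mathcal{H}_u \to \mathbb{R}^{N_d}$ a bounded linear operator, $\tau > 0$, $d \in \mathbb{R}^{N_d}$, and $\Phi(v,\lambda) = (\tau/2)\lVert d - \lambda Hv\rVert^2$. Let $\mu_0^v$ be a Gaussian measure on $\mathcal{H}_u$ with mean zero and covariance a positive self-adjoint trace-class operator $\mathcal{C}_0$, and let $\mu_0^\lambda$ be the Gaussian measure $\mathcal{N}(\bar{\lambda}, \sigma)$ on $\mathbb{R}$. Let $\nu^v$ and $\nu^\lambda$ be probability measures with $d\nu^v/d\mu_0^v \propto \exp(-\Phi_v)$ and $d\nu^\lambda/d\mu_0^\lambda \propto \exp(-\Phi_\lambda)$, where $\sup_{1/N \le \lVert v\rVert_{\mathcal{H}_u} \le N} \Phi_v(v) < \infty$ for all $N>0$, $\int_{\mathcal{H}_u} e^{-\Phi_v(v)} \max(1, \lVert v\rVert_{\mathcal{H}_u}^2)\,\mu_0^v(dv) < \infty$, $\sup_{|\lambda| \le N} \Phi_\lambda(\lambda)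 < \infty$ for all $N>0$, and $\int_{\mathbb{R}} e^{-\Phi_\lambda(\lambda)} \max(1, \lambda^2)\,\mu_0^\lambda(d\lambda) < \infty$. Then: (i) for every $N > 0$, $\sup_{v : 1/N \le \lVert v\rVert_{\mathcal{H}_u} \le N} \int_{\mathbb{R}} \Phi(v,\lambda)\,\nu^\lambda(d\lambda) < \infty$; (ii) for every $N > 0$, $\sup_{\lambda : |\lambda| \le N} \int_{\mathcal{H}_u} \Phi(v,\lambda)\,\nu^v(dv) < \infty$; (iii) $\int_{\mathcal{H}_u} \exp\big(-\int_{\mathbb{R}} \Phi(v,\lambda)\,\nu^\lambda(d\lambda)\big) \max(1, \lVert v\rVert_{\mathcal{H}_u}^2)\,\mu_0^v(dv) < \infty$; and (iv) $\int_{\mathbb{R}} \exp\big(-\int_{\mathcal{H}_u} \Phi(v,\lambda)\,\nu^v(dv)\big) \max(1, \lambda^2)\,\mu_0^\lambda(d\lambda) < \infty$. -/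
open MeasureTheory ProbabilityTheory Real
open scoped ENNReal NNReal RealInnerProductSpace

lemma aux_lintegral_withDensity_le {α : Type*} [MeasurableSpace α] (μ : Measure α)
    (f : α → ℝ≥0∞) {g : α → ℝ≥0∞} (hg : Measurable g) :
    ∫⁻ a, g a ∂μ.withDensity f ≤ ∫⁻ a, g a * f a ∂μ := by
  have key : ∀ φ : SimpleFunc α ℝ≥0∞,
      (∫⁻ a, φ a ∂μ.withDensity f) ≤ ∫⁻ a, φ a * f a ∂μ := by
    intro φ
    induction φ using SimpleFunc.induction with
    | @const c s hs =>
      have main : (∫⁻ a, Set.indicator s (fun _ => c) a ∂μ.withDensity f)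
          ≤ ∫⁻ a, Set.indicator s (fun _ => c) a * f a ∂μ := by
        have e1 : (∫⁻ a, Set.indicator s (fun _ => c) a ∂μ.withDensity f)
            = c * ∫⁻ a in s, f a ∂μ := by
          rw [lintegral_indicator_const hs, withDensity_apply f hs]
        have e2 : (∫⁻ a in s, c * f a ∂μ)
            = ∫⁻ a, Set.indicator s (fun x => c * f x) a ∂μ :=
          (lintegral_indicator hs _).symm
        have e3 : (∫⁻ a, Set.indicator s (fun x => c * f x) a ∂μ)
            ≤ ∫⁻ a, Set.indicator s (fun _ => c) a * f a ∂μ := by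
          refine lintegral_mono fun a => ?_
          by_cases ha : a ∈ s <;> simp [ha]
        rw [e1]
        exact le_trans (lintegral_const_mul_le _ _) (e2 ▸ e3)
      simp [SimpleFunc.coe_piecewise, Set.piecewise_eq_indicator, Function.const]
      exact main
    | @add φ ψ hd hφ hψ =>
      have e1 : (∫⁻ a, (φ + ψ) a ∂μ.withDensity f)
          = (∫⁻ a, φ a ∂μ.withDensity f) + ∫⁻ a, ψ a ∂μ.withDensity f := by
        simp only [SimpleFunc.coe_add, Pi.add_apply]
        exact lintegral_add_left φ.measurable _
      have e2 : (∫⁻ a, (φ a * f a + ψ a * f a) ∂μ) = ∫⁻ a, (φ + ψ) a * f a ∂μ := by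
        congr 1; ext a; simp [add_mul]
      rw [e1]
      exact le_trans (add_le_add hφ hψ) (le_trans (le_lintegral_add _ _) e2.le)
  rw [lintegral_eq_iSup_eapprox_lintegral hg]
  refine iSup_le fun n => ?_
  rw [← SimpleFunc.lintegral_eq_lintegral]
  refine (key _).trans (lintegral_mono fun a => ?_)
  gcongr
  exact (le_iSup (fun n => (SimpleFunc.eapprox g n : α → ℝ≥0∞) a) n).trans
    (SimpleFunc.iSup_eapprox_apply hg a).le

lemma aux_nu {α : Type*} [MeasurableSpace α] (μ : Measure α) (Φ0 : α → ℝ) {G : α → ℝ≥0∞}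
    (hG : Measurable G) (ν : Measure α) [IsProbabilityMeasure ν]
    (hν : ν = (∫⁻ a, ENNReal.ofReal (Real.exp (-Φ0 a)) ∂μ)⁻¹ •
      μ.withDensity fun a => ENNReal.ofReal (Real.exp (-Φ0 a)))
    (h2 : ∫⁻ a, G a * ENNReal.ofReal (Real.exp (-Φ0 a)) ∂μ < ⊤) :
    ∫⁻ a, G a ∂ν < ⊤ := by
  set f := fun a => ENNReal.ofReal (Real.exp (-Φ0 a)) with hf
  set Z := ∫⁻ a, f a ∂μ with hZ
  have huniv : ν Set.univ = 1 := measure_univ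
  rw [hν, Measure.smul_apply, smul_eq_mul, withDensity_apply _ MeasurableSet.univ,
    Measure.restrict_univ, ← hZ] at huniv
  have hZ0 : Z ≠ 0 := by rintro h; rw [h] at huniv; simp at huniv
  calc (∫⁻ a, G a ∂ν) = Z⁻¹ * ∫⁻ a, G a ∂μ.withDensity f := by
        rw [hν]; exact lintegral_smul_measure _ _
    _ ≤ Z⁻¹ * ∫⁻ a, G a * f a ∂μ :=
        mul_le_mul_right (aux_lintegral_withDensity_le μ f hG) _
    _ < ⊤ := ENNReal.mul_lt_top (ENNReal.inv_lt_top.mpr (pos_iff_ne_zero.mpr hZ0)) h2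

lemma aux_gauss_sq (m : ℝ) (v : ℝ≥0) :
    Integrable (fun x : ℝ => x ^ 2) (gaussianReal m v) := by
  by_cases hv : v = 0
  · subst hv
    rw [gaussianReal_zero_var]
    refine ⟨(measurable_id.pow_const 2).aestronglyMeasurable, ?_⟩
    rw [HasFiniteIntegral, lintegral_dirac]
    exact ENNReal.coe_lt_top
  · rw [gaussianReal_of_var_ne_zero m hv]
    rw [integrable_withDensity_iff (measurable_gaussianPDF m v)
      (ae_of_all _ fun x => ENNReal.ofReal_lt_top)]
    have hvpos : (0:ℝ) < (v:ℝ) := NNReal.coe_pos.mpr (pos_iff_ne_zero.mpr hv)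
    have hb : (0:ℝ) < (2 * (v:ℝ))⁻¹ := by positivity
    have h2 : Integrable (fun y : ℝ => y ^ 2 * rexp (-(2 * (v:ℝ))⁻¹ * y ^ 2)) volume := by
      have h := integrable_rpow_mul_exp_neg_mul_sq hb (s := ((2:ℕ):ℝ)) (by norm_num)
      simpa [Real.rpow_natCast] using h
    have h1 : Integrable (fun y : ℝ => y * rexp (-(2 * (v:ℝ))⁻¹ * y ^ 2)) volume :=
      integrable_mul_exp_neg_mul_sq hb
    have h0 : Integrable (fun y : ℝ => rexp (-(2 * (v:ℝ))⁻¹ * y ^ 2)) volume :=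
      integrable_exp_neg_mul_sq hb
    have hsum : Integrable (fun y : ℝ => (y + m) ^ 2 * rexp (-(2 * (v:ℝ))⁻¹ * y ^ 2)) volume := by
      refine ((h2.add (h1.const_mul (2 * m))).add (h0.const_mul (m ^ 2))).congr
        (Filter.Eventually.of_forall fun y => ?_)
      simp only [Pi.add_apply]
      ring
    have hshift : Integrable
        (fun x : ℝ => (x - m + m) ^ 2 * rexp (-(2 * (v:ℝ))⁻¹ * (x - m) ^ 2)) volume :=
      hsum.comp_sub_right m
    simp only [sub_add_cancel] at hshift
    refine (hshift.const_mul (√(2 * π * (v:ℝ)))⁻¹).congr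
      (Filter.Eventually.of_forall fun x => ?_)
    simp only [gaussianPDF, gaussianPDFReal]
    rw [ENNReal.toReal_ofReal (by positivity)]
    have harg : -(2 * (v:ℝ))⁻¹ * (x - m) ^ 2 = -(x - m) ^ 2 / (2 * (v:ℝ)) := by
      field_simp
    rw [harg]
    ring

lemma aux_countable {E : Type*} [NormedAddCommGroup E] [InnerProductSpace ℝ E]
    [TopologicalSpace.SeparableSpace E] {w : Set E}
    (hw : Orthonormal ℝ ((↑) : w → E)) : Countable w := by
  refine Pairwise.countable_of_isOpen_disjoint
    (s := fun i : w => Metric.ball (i : E) (1/2)) ?_ (fun i => Metric.isOpen_ball)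
    (fun i => Metric.nonempty_ball.mpr (by norm_num))
  intro i j hij
  have hne : (i : E) ≠ j := fun h => hij (Subtype.coe_injective h)
  have h2 : ‖(i : E) - j‖ ^ 2 = 2 := by
    rw [norm_sub_sq_real, hw.1 i, hw.1 j, hw.2 hij]
    norm_num
  have hd : (1 : ℝ) ≤ dist (i : E) (j : E) := by
    rw [dist_eq_norm]
    nlinarith [norm_nonneg ((i : E) - (j : E))]
  simp only [Function.onFun]
  exact Metric.ball_disjoint_ball (by linarith)

lemma aux_secmom {Hu : Type*} [NormedAddCommGroup Hu] [InnerProductSpace ℝ Hu]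
    [CompleteSpace Hu] [TopologicalSpace.SeparableSpace Hu]
    [MeasurableSpace Hu] [BorelSpace Hu]
    (μ0v : Measure Hu)
    (hGauss : ∀ L : Hu →L[ℝ] ℝ, ∃ s : ℝ≥0, μ0v.map L = gaussianReal 0 s)
    (C0 : Hu →L[ℝ] Hu)
    (hC0pos : ∀ x : Hu, 0 ≤ ⟪C0 x, x⟫)
    (hC0tc : ∀ e : HilbertBasis ℕ ℝ Hu, Summable fun k => ⟪C0 (e k), e k⟫)
    (hC0cov : ∀ x y : Hu, (∫ v, ⟪v, x⟫ * ⟪v, y⟫ ∂μ0v) = ⟪C0 x, y⟫) :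
    ∫⁻ v, ENNReal.ofReal (‖v‖ ^ 2) ∂μ0v < ⊤ := by
  obtain ⟨w, b, hb⟩ := exists_hilbertBasis ℝ Hu
  have hON : Orthonormal ℝ ((↑) : w → Hu) := hb ▸ b.orthonormal
  haveI : Countable w := aux_countable hON
  have hsum : Summable (fun i : w => ⟪C0 (b i), b i⟫) := by
    cases finite_or_infinite w with
    | inl h => exact Summable.of_finite
    | inr h =>
      obtain ⟨den⟩ := nonempty_denumerable (↥w)
      let e : ↥w ≃ ℕ := @Denumerable.eqv ↥w den
      have hON2 : Orthonormal ℝ (fun k : ℕ => b (e.symm k)) :=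
        b.orthonormal.comp _ e.symm.injective
      have hdense : ⊤ ≤ (Submodule.span ℝ
          (Set.range fun k : ℕ => b (e.symm k))).topologicalClosure := by
        have hr : (Set.range fun k : ℕ => b (e.symm k)) = Set.range b :=
          e.symm.surjective.range_comp b
        rw [hr, b.dense_span]
      let b' : HilbertBasis ℕ ℝ Hu := HilbertBasis.mk hON2 hdense
      have hcoe : ⇑b' = fun k : ℕ => b (e.symm k) := HilbertBasis.coe_mk _ _
      have h := hC0tc b'
      rw [hcoe] at h
      exact (Equiv.summable_iff e.symm).mp h
  have key : ∀ i : w, (∫⁻ v, ENNReal.ofReal (⟪v, (b i : Hu)⟫ ^ 2) ∂μ0v)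
      = ENNReal.ofReal ⟪C0 (b i), b i⟫ := by
    intro i
    obtain ⟨s, hs⟩ := hGauss (innerSL ℝ (b i))
    have hLint : Integrable (fun v => ⟪v, (b i : Hu)⟫ ^ 2) μ0v := by
      have h1 : Integrable (fun x : ℝ => x ^ 2) (Measure.map (innerSL ℝ (b i)) μ0v) :=
        hs ▸ aux_gauss_sq 0 s
      have h2 := (integrable_map_measure
        (measurable_id.pow_const 2).aestronglyMeasurable
        (innerSL ℝ (b i)).continuous.measurable.aemeasurable).mp h1
      have : (fun v => ((innerSL ℝ (b i)) v) ^ 2) = fun v => ⟪v, (b i : Hu)⟫ ^ 2 := by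
        funext v
        rw [innerSL_apply_apply, real_inner_comm]
      rwa [← this]
    rw [← ofReal_integral_eq_lintegral_ofReal hLint (ae_of_all _ fun v => sq_nonneg _)]
    congr 1
    rw [← hC0cov (b i) (b i)]
    congr 1
    funext v
    ring
  have hmeas : ∀ i : w, AEMeasurable (fun v => ENNReal.ofReal (⟪v, (b i : Hu)⟫ ^ 2)) μ0v := by
    intro i
    exact (((continuous_id.inner continuous_const).pow 2).measurable.ennreal_ofReal).aemeasurable
  calc (∫⁻ v, ENNReal.ofReal (‖v‖ ^ 2) ∂μ0v)
      = ∫⁻ v, ∑' i : w, ENNReal.ofReal (⟪v, (b i : Hu)⟫ ^ 2) ∂μ0v := by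
        refine lintegral_congr fun v => ?_
        have hS : HasSum (fun i : w => ⟪v, (b i : Hu)⟫ * ⟪(b i : Hu), v⟫) ⟪v, v⟫ :=
          b.hasSum_inner_mul_inner v v
        have hS2 : HasSum (fun i : w => ⟪v, (b i : Hu)⟫ ^ 2) (‖v‖ ^ 2) := by
          have h1 : (fun i : w => ⟪v, (b i : Hu)⟫ * ⟪(b i : Hu), v⟫)
              = fun i : w => ⟪v, (b i : Hu)⟫ ^ 2 := by
            funext i
            rw [real_inner_comm (b i : Hu) v]
            ring
          rw [h1, real_inner_self_eq_norm_sq] at hS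
          exact hS
        rw [← hS2.tsum_eq, ENNReal.ofReal_tsum_of_nonneg (fun i => sq_nonneg _) hS2.summable]
    _ = ∑' i : w, ∫⁻ v, ENNReal.ofReal (⟪v, (b i : Hu)⟫ ^ 2) ∂μ0v := lintegral_tsum hmeas
    _ = ∑' i : w, ENNReal.ofReal ⟪C0 (b i), b i⟫ := tsum_congr key
    _ < ⊤ := by
        rw [← ENNReal.ofReal_tsum_of_nonneg (fun i => hC0pos _) hsum]
        exact ENNReal.ofReal_lt_top
set_option maxHeartbeats 1600000 in
/-- Verification of the conditions `T₁, T₂, T₃, T₄` of Assumption 1 for the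
NCP potential `Φ(v,λ) = (τ/2)‖d - λ H v‖²`, a centered Gaussian prior `μ₀ᵛ` on `𝓗_u` with
positive self-adjoint trace-class covariance `C₀`, a Gaussian prior `N(λ̄, σ)` on `ℝ`, and
approximating measures `νᵛ ∝ e^{-Φ_v} μ₀ᵛ`, `ν^λ ∝ e^{-Φ_λ} μ₀^λ` whose potentials lie in
`R¹ ∩ R²`. -/
theorem stmt5
    {Hu : Type*} [NormedAddCommGroup Hu] [InnerProductSpace ℝ Hu]
    [CompleteSpace Hu] [TopologicalSpace.SeparableSpace Hu]
    [MeasurableSpace Hu] [BorelSpace Hu]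
    (Nd : ℕ) (hNd : 0 < Nd)
    (H : Hu →L[ℝ] EuclideanSpace ℝ (Fin Nd))
    (τ : ℝ) (hτ : 0 < τ) (d : EuclideanSpace ℝ (Fin Nd))
    (Φ : Hu → ℝ → ℝ)
    (hΦ : ∀ (v : Hu) (lam : ℝ), Φ v lam = τ / 2 * ‖d - lam • H v‖ ^ 2)
    -- the prior on `v`: a centered Gaussian with trace-class covariance `C₀`
    (μ0v : Measure Hu) [IsProbabilityMeasure μ0v]
    (hGauss : ∀ L : Hu →L[ℝ] ℝ, ∃ s : ℝ≥0, μ0v.map L = gaussianReal 0 s)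
    (C0 : Hu →L[ℝ] Hu)
    (hC0sa : ∀ x y : Hu, ⟪C0 x, y⟫ = ⟪x, C0 y⟫)
    (hC0pos : ∀ x : Hu, 0 ≤ ⟪C0 x, x⟫)
    (hC0tc : ∀ e : HilbertBasis ℕ ℝ Hu, Summable fun k => ⟪C0 (e k), e k⟫)
    (hC0cov : ∀ x y : Hu, (∫ v, ⟪v, x⟫ * ⟪v, y⟫ ∂μ0v) = ⟪C0 x, y⟫)
    -- the prior on `λ`: the Gaussian `N(λ̄, σ)` on `ℝ`
    (lamBar : ℝ) (σ : ℝ≥0) (hσ : 0 < σ)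
    (μ0lam : Measure ℝ) (hμ0lam : μ0lam = gaussianReal lamBar σ)
    -- the approximating measures `νᵛ` and `ν^λ`
    (Φv : Hu → ℝ) (Φlam : ℝ → ℝ)
    (νv : Measure Hu) [IsProbabilityMeasure νv]
    (νlam : Measure ℝ) [IsProbabilityMeasure νlam]
    (hνv : νv = (∫⁻ v, ENNReal.ofReal (Real.exp (-Φv v)) ∂μ0v)⁻¹ •
      μ0v.withDensity fun v => ENNReal.ofReal (Real.exp (-Φv v)))
    (hνlam : νlam = (∫⁻ l, ENNReal.ofReal (Real.exp (-Φlam l)) ∂μ0lam)⁻¹ •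
      μ0lam.withDensity fun l => ENNReal.ofReal (Real.exp (-Φlam l)))
    -- `Φ_v ∈ R¹_v ∩ R²_v` and `Φ_λ ∈ R¹_λ ∩ R²_λ`
    (hΦv1 : ∀ N : ℝ, 0 < N → ∃ C : ℝ, ∀ v : Hu, 1 / N ≤ ‖v‖ → ‖v‖ ≤ N → Φv v ≤ C)
    (hΦv2 : (∫⁻ v, ENNReal.ofReal (Real.exp (-Φv v) * max 1 (‖v‖ ^ 2)) ∂μ0v) < ⊤)
    (hΦlam1 : ∀ N : ℝ, 0 < N → ∃ C : ℝ, ∀ l : ℝ, |l| ≤ N → Φlam l ≤ C)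
    (hΦlam2 : (∫⁻ l, ENNReal.ofReal (Real.exp (-Φlam l) * max 1 (l ^ 2)) ∂μ0lam) < ⊤) :
    -- (i)  T₁ < ∞
    (∀ N : ℝ, 0 < N → ∃ C : ℝ, ∀ v : Hu, 1 / N ≤ ‖v‖ → ‖v‖ ≤ N →
      (∫ l, Φ v l ∂νlam) ≤ C) ∧
    -- (ii) T₂ < ∞
    (∀ N : ℝ, 0 < N → ∃ C : ℝ, ∀ l : ℝ, |l| ≤ N →
      (∫ v, Φ v l ∂νv) ≤ C) ∧
    -- (iii) T₃ < ∞
    ((∫⁻ v, ENNReal.ofReal (Real.exp (-(∫ l, Φ v l ∂νlam)) * max 1 (‖v‖ ^ 2)) ∂μ0v) < ⊤) ∧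
    -- (iv) T₄ < ∞
    ((∫⁻ l, ENNReal.ofReal (Real.exp (-(∫ v, Φ v l ∂νv)) * max 1 (l ^ 2)) ∂μ0lam) < ⊤) := by
  subst hμ0lam
  have hnnΦ : ∀ (v : Hu) (l : ℝ), 0 ≤ Φ v l := fun v l => by rw [hΦ]; positivity
  have hbound : ∀ (v : Hu) (l : ℝ),
      Φ v l ≤ τ * (‖d‖ ^ 2 + ‖H‖ ^ 2 * ‖v‖ ^ 2 * l ^ 2) := by
    intro v l
    rw [hΦ]
    have h1 : ‖d - l • H v‖ ≤ ‖d‖ + |l| * (‖H‖ * ‖v‖) := by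
      refine (norm_sub_le _ _).trans ?_
      rw [norm_smul, Real.norm_eq_abs]
      exact add_le_add_right (mul_le_mul_of_nonneg_left (H.le_opNorm v) (abs_nonneg l)) _
    have h0 : (0:ℝ) ≤ ‖d - l • H v‖ := norm_nonneg _
    have hX2 : ‖d - l • H v‖ ^ 2 ≤ (‖d‖ + |l| * (‖H‖ * ‖v‖)) ^ 2 := pow_le_pow_left₀ h0 h1 2
    have key2 : (‖d‖ + |l| * (‖H‖ * ‖v‖)) ^ 2
        ≤ 2 * ‖d‖ ^ 2 + 2 * (‖H‖ ^ 2 * ‖v‖ ^ 2 * |l| ^ 2) := by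
      nlinarith [sq_nonneg (‖d‖ - |l| * (‖H‖ * ‖v‖))]
    calc τ / 2 * ‖d - l • H v‖ ^ 2
        ≤ τ / 2 * (2 * ‖d‖ ^ 2 + 2 * (‖H‖ ^ 2 * ‖v‖ ^ 2 * |l| ^ 2)) :=
          mul_le_mul_of_nonneg_left (hX2.trans key2) (by positivity)
      _ = τ * (‖d‖ ^ 2 + ‖H‖ ^ 2 * ‖v‖ ^ 2 * l ^ 2) := by rw [sq_abs]; ring
  have hGlam : Measurable fun l : ℝ => ENNReal.ofReal (max 1 (l ^ 2)) :=
    (measurable_const.max (measurable_id.pow_const 2)).ennreal_ofReal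
  have hGv : Measurable fun v : Hu => ENNReal.ofReal (max 1 (‖v‖ ^ 2)) :=
    (measurable_const.max (measurable_norm.pow_const 2)).ennreal_ofReal
  have hIlam : (∫⁻ l, ENNReal.ofReal (max 1 (l ^ 2)) ∂νlam) < ⊤ := by
    refine aux_nu _ Φlam hGlam νlam hνlam ?_
    have he : ∀ l : ℝ, ENNReal.ofReal (max 1 (l ^ 2)) * ENNReal.ofReal (Real.exp (-Φlam l))
        = ENNReal.ofReal (Real.exp (-Φlam l) * max 1 (l ^ 2)) := by
      intro l
      rw [← ENNReal.ofReal_mul (le_trans zero_le_one (le_max_left _ _)), mul_comm]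
    simp_rw [he]
    exact hΦlam2
  have hIv : (∫⁻ v, ENNReal.ofReal (max 1 (‖v‖ ^ 2)) ∂νv) < ⊤ := by
    refine aux_nu _ Φv hGv νv hνv ?_
    have he : ∀ v : Hu, ENNReal.ofReal (max 1 (‖v‖ ^ 2)) * ENNReal.ofReal (Real.exp (-Φv v))
        = ENNReal.ofReal (Real.exp (-Φv v) * max 1 (‖v‖ ^ 2)) := by
      intro v
      rw [← ENNReal.ofReal_mul (le_trans zero_le_one (le_max_left _ _)), mul_comm]
    simp_rw [he]
    exact hΦv2
  refine ⟨?_, ?_, ?_, ?_⟩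
  · -- (i)
    intro N hN
    set K := τ * (‖d‖ ^ 2 + ‖H‖ ^ 2 * N ^ 2) with hK
    have hK0 : (0:ℝ) ≤ K := by rw [hK]; positivity
    refine ⟨(ENNReal.ofReal K * ∫⁻ l, ENNReal.ofReal (max 1 (l ^ 2)) ∂νlam).toReal,
      fun v hv1 hv2 => ?_⟩
    have hptw : ∀ l : ℝ, Φ v l ≤ K * max 1 (l ^ 2) := by
      intro l
      have h := hbound v l
      have h1 : (1:ℝ) ≤ max 1 (l ^ 2) := le_max_left _ _
      have h2 : l ^ 2 ≤ max 1 (l ^ 2) := le_max_right _ _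
      have hvN : ‖v‖ ^ 2 ≤ N ^ 2 := by nlinarith [norm_nonneg v]
      have a1 : ‖H‖ ^ 2 * ‖v‖ ^ 2 * l ^ 2 ≤ ‖H‖ ^ 2 * N ^ 2 * l ^ 2 := by
        nlinarith [sq_nonneg ‖H‖, sq_nonneg l, mul_nonneg (sq_nonneg ‖H‖) (sq_nonneg l)]
      have a2 : ‖H‖ ^ 2 * N ^ 2 * l ^ 2 ≤ ‖H‖ ^ 2 * N ^ 2 * max 1 (l ^ 2) :=
        mul_le_mul_of_nonneg_left h2 (by positivity)
      have a3 : ‖d‖ ^ 2 * 1 ≤ ‖d‖ ^ 2 * max 1 (l ^ 2) :=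
        mul_le_mul_of_nonneg_left h1 (sq_nonneg _)
      have hXY : ‖d‖ ^ 2 + ‖H‖ ^ 2 * ‖v‖ ^ 2 * l ^ 2
          ≤ (‖d‖ ^ 2 + ‖H‖ ^ 2 * N ^ 2) * max 1 (l ^ 2) := by nlinarith
      calc Φ v l ≤ τ * (‖d‖ ^ 2 + ‖H‖ ^ 2 * ‖v‖ ^ 2 * l ^ 2) := h
        _ ≤ τ * ((‖d‖ ^ 2 + ‖H‖ ^ 2 * N ^ 2) * max 1 (l ^ 2)) :=
            mul_le_mul_of_nonneg_left hXY hτ.le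
        _ = K * max 1 (l ^ 2) := by rw [hK]; ring
    have hmeasΦ : AEStronglyMeasurable (fun l => Φ v l) νlam := by
      have hfun : (fun l => Φ v l) = fun l => τ / 2 * ‖d - l • H v‖ ^ 2 := funext fun l => hΦ v l
      rw [hfun]
      exact (continuous_const.mul (((continuous_const.sub
        (continuous_id.smul continuous_const)).norm).pow 2)).aestronglyMeasurable
    rw [integral_eq_lintegral_of_nonneg_ae (ae_of_all _ fun l => hnnΦ v l) hmeasΦ]
    refine ENNReal.toReal_mono (ENNReal.mul_ne_top ENNReal.ofReal_ne_top hIlam.ne) ?_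
    calc (∫⁻ l, ENNReal.ofReal (Φ v l) ∂νlam)
        ≤ ∫⁻ l, ENNReal.ofReal K * ENNReal.ofReal (max 1 (l ^ 2)) ∂νlam := by
          refine lintegral_mono fun l => ?_
          rw [← ENNReal.ofReal_mul hK0]
          exact ENNReal.ofReal_le_ofReal (hptw l)
      _ = ENNReal.ofReal K * ∫⁻ l, ENNReal.ofReal (max 1 (l ^ 2)) ∂νlam :=
          lintegral_const_mul _ hGlam
  · -- (ii)
    intro N hN
    set K := τ * (‖d‖ ^ 2 + ‖H‖ ^ 2 * N ^ 2) with hK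
    have hK0 : (0:ℝ) ≤ K := by rw [hK]; positivity
    refine ⟨(ENNReal.ofReal K * ∫⁻ v, ENNReal.ofReal (max 1 (‖v‖ ^ 2)) ∂νv).toReal,
      fun l hl => ?_⟩
    have hptw : ∀ v : Hu, Φ v l ≤ K * max 1 (‖v‖ ^ 2) := by
      intro v
      have h := hbound v l
      have h1 : (1:ℝ) ≤ max 1 (‖v‖ ^ 2) := le_max_left _ _
      have h2 : ‖v‖ ^ 2 ≤ max 1 (‖v‖ ^ 2) := le_max_right _ _
      have hlN : l ^ 2 ≤ N ^ 2 := by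
        have h := mul_self_le_mul_self (abs_nonneg l) hl
        nlinarith [sq_abs l]
      have a1 : ‖H‖ ^ 2 * ‖v‖ ^ 2 * l ^ 2 ≤ ‖H‖ ^ 2 * N ^ 2 * ‖v‖ ^ 2 := by
        nlinarith [sq_nonneg ‖H‖, sq_nonneg ‖v‖, mul_nonneg (sq_nonneg ‖H‖) (sq_nonneg ‖v‖)]
      have a2 : ‖H‖ ^ 2 * N ^ 2 * ‖v‖ ^ 2 ≤ ‖H‖ ^ 2 * N ^ 2 * max 1 (‖v‖ ^ 2) :=
        mul_le_mul_of_nonneg_left h2 (by positivity)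
      have a3 : ‖d‖ ^ 2 * 1 ≤ ‖d‖ ^ 2 * max 1 (‖v‖ ^ 2) :=
        mul_le_mul_of_nonneg_left h1 (sq_nonneg _)
      have hXY : ‖d‖ ^ 2 + ‖H‖ ^ 2 * ‖v‖ ^ 2 * l ^ 2
          ≤ (‖d‖ ^ 2 + ‖H‖ ^ 2 * N ^ 2) * max 1 (‖v‖ ^ 2) := by nlinarith
      calc Φ v l ≤ τ * (‖d‖ ^ 2 + ‖H‖ ^ 2 * ‖v‖ ^ 2 * l ^ 2) := h
        _ ≤ τ * ((‖d‖ ^ 2 + ‖H‖ ^ 2 * N ^ 2) * max 1 (‖v‖ ^ 2)) :=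
            mul_le_mul_of_nonneg_left hXY hτ.le
        _ = K * max 1 (‖v‖ ^ 2) := by rw [hK]; ring
    have hmeasΦ : AEStronglyMeasurable (fun v => Φ v l) νv := by
      have hfun : (fun v : Hu => Φ v l) = fun v => τ / 2 * ‖d - l • H v‖ ^ 2 :=
        funext fun v => hΦ v l
      rw [hfun]
      exact (continuous_const.mul (((continuous_const.sub
        (H.continuous.const_smul l)).norm).pow 2)).aestronglyMeasurable
    rw [integral_eq_lintegral_of_nonneg_ae (ae_of_all _ fun v => hnnΦ v l) hmeasΦ]
    refine ENNReal.toReal_mono (ENNReal.mul_ne_top ENNReal.ofReal_ne_top hIv.ne) ?_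
    calc (∫⁻ v, ENNReal.ofReal (Φ v l) ∂νv)
        ≤ ∫⁻ v, ENNReal.ofReal K * ENNReal.ofReal (max 1 (‖v‖ ^ 2)) ∂νv := by
          refine lintegral_mono fun v => ?_
          rw [← ENNReal.ofReal_mul hK0]
          exact ENNReal.ofReal_le_ofReal (hptw v)
      _ = ENNReal.ofReal K * ∫⁻ v, ENNReal.ofReal (max 1 (‖v‖ ^ 2)) ∂νv :=
          lintegral_const_mul _ hGv
  · -- (iii)
    have hInn : ∀ v : Hu, 0 ≤ ∫ l, Φ v l ∂νlam := fun v => integral_nonneg fun l => hnnΦ v l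
    calc (∫⁻ v, ENNReal.ofReal (Real.exp (-(∫ l, Φ v l ∂νlam)) * max 1 (‖v‖ ^ 2)) ∂μ0v)
        ≤ ∫⁻ v, ENNReal.ofReal (max 1 (‖v‖ ^ 2)) ∂μ0v := by
          refine lintegral_mono fun v => ENNReal.ofReal_le_ofReal ?_
          refine mul_le_of_le_one_left (le_trans zero_le_one (le_max_left _ _)) ?_
          calc Real.exp (-(∫ l, Φ v l ∂νlam)) ≤ Real.exp 0 :=
              Real.exp_le_exp.mpr (neg_nonpos.mpr (hInn v))
            _ = 1 := Real.exp_zero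
      _ ≤ ∫⁻ v, (1 + ENNReal.ofReal (‖v‖ ^ 2)) ∂μ0v := by
          refine lintegral_mono fun v => ?_
          rw [← ENNReal.ofReal_one, ← ENNReal.ofReal_add zero_le_one (sq_nonneg _)]
          exact ENNReal.ofReal_le_ofReal
            (max_le (by nlinarith [sq_nonneg ‖v‖]) (by nlinarith [sq_nonneg ‖v‖]))
      _ = 1 + ∫⁻ v, ENNReal.ofReal (‖v‖ ^ 2) ∂μ0v := by
          rw [lintegral_add_left measurable_const, lintegral_one, measure_univ]
      _ < ⊤ := ENNReal.add_lt_top.mpr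
          ⟨ENNReal.one_lt_top, aux_secmom μ0v hGauss C0 hC0pos hC0tc hC0cov⟩
  · -- (iv)
    have hInn : ∀ l : ℝ, 0 ≤ ∫ v, Φ v l ∂νv := fun l => integral_nonneg fun v => hnnΦ v l
    have hg2 : (∫⁻ l, ENNReal.ofReal (l ^ 2) ∂(gaussianReal lamBar σ)) < ⊤ := by
      rw [← ofReal_integral_eq_lintegral_ofReal (aux_gauss_sq lamBar σ)
        (ae_of_all _ fun x => sq_nonneg _)]
      exact ENNReal.ofReal_lt_top
    calc (∫⁻ l, ENNReal.ofReal (Real.exp (-(∫ v, Φ v l ∂νv)) * max 1 (l ^ 2))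
          ∂(gaussianReal lamBar σ))
        ≤ ∫⁻ l, ENNReal.ofReal (max 1 (l ^ 2)) ∂(gaussianReal lamBar σ) := by
          refine lintegral_mono fun l => ENNReal.ofReal_le_ofReal ?_
          refine mul_le_of_le_one_left (le_trans zero_le_one (le_max_left _ _)) ?_
          calc Real.exp (-(∫ v, Φ v l ∂νv)) ≤ Real.exp 0 :=
              Real.exp_le_exp.mpr (neg_nonpos.mpr (hInn l))
            _ = 1 := Real.exp_zero
      _ ≤ ∫⁻ l, (1 + ENNReal.ofReal (l ^ 2)) ∂(gaussianReal lamBar σ) := by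
          refine lintegral_mono fun l => ?_
          rw [← ENNReal.ofReal_one, ← ENNReal.ofReal_add zero_le_one (sq_nonneg _)]
          exact ENNReal.ofReal_le_ofReal
            (max_le (by nlinarith [sq_nonneg l]) (by nlinarith [sq_nonneg l]))
      _ = 1 + ∫⁻ l, ENNReal.ofReal (l ^ 2) ∂(gaussianReal lamBar σ) := by
          rw [lintegral_add_left measurable_const, lintegral_one, measure_univ]
      _ < ⊤ := ENNReal.add_lt_top.mpr ⟨ENNReal.one_lt_top, hg2⟩
end

section
/- Let $n, N_d$ be positive integers, $\Sigma$ an $n \times n$ real symmetric positive-definite matrix, $H$ an $N_d \times n$ real matrix, $d \in \mathbb{R}^{N_d}$, $\tau > 0$, and let $p_\lambda$ be the density of $\mathcal{N}(\bar\lambda, \sigma)$ on $\mathbb{R}$. Define the NCP posterior probability measure $\mu^N$ on $\mathbb{R}^n \times \mathbb{R}$ with Lebesgue density proportional to $\exp(-(\tau/2)\lVert d - \lambda H v\rVert^2)\,\varphi_\Sigma(v)\,p_\lambda(\lambda)$, where $\varphi_\Sigma$ is the density of $\mathcal{N}(0,\Sigma)$, and the CP posterior probability measure $\widetilde{\mu}^N$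 on $\mathbb{R}^n \times \mathbb{R}$ with Lebesgue density proportional to $\exp(-(\tau/2)\lVert H u - d\rVert^2)\,\varphi_{\lambda^2\Sigma}(u)\,p_\lambda(\lambda)$ (defined for $\lambda \ne 0$; the set $\{\lambda = 0\}$ is null). Then the pushforward of $\mu^N$ under the map $(v,\lambda) \mapsto (\lambda v, \lambda)$ equals $\widetilde{\mu}^N$. -/
open MeasureTheory ProbabilityTheory Real Matrix
open scoped ENNReal NNReal

/-- The density `φ_Σ(v) = (2π)^{-n/2} det(Σ)^{-1/2} exp(-½ vᵀ Σ⁻¹ v)` of the Gaussian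
`N(0, Σ)` on `ℝⁿ`. -/
noncomputable def gaussDensityFin (n : ℕ) (S : Matrix (Fin n) (Fin n) ℝ)
    (v : Fin n → ℝ) : ℝ :=
  (2 * π) ^ (-(n : ℝ) / 2) * S.det ^ (-(1 : ℝ) / 2) *
    Real.exp (-(1 / 2) * (v ⬝ᵥ S⁻¹ *ᵥ v))

lemma gaussDensityFin_nonneg (n : ℕ) {S : Matrix (Fin n) (Fin n) ℝ} (hS : 0 ≤ S.det)
    (v : Fin n → ℝ) : 0 ≤ gaussDensityFin n S v := by
  unfold gaussDensityFin
  have h1 : (0:ℝ) ≤ (2 * π) ^ (-(n : ℝ) / 2) := Real.rpow_nonneg (by positivity) _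
  have h2 : (0:ℝ) ≤ S.det ^ (-(1 : ℝ) / 2) := Real.rpow_nonneg hS _
  positivity

lemma measurable_gaussDensityFin (n : ℕ) (S : Matrix (Fin n) (Fin n) ℝ) :
    Measurable (gaussDensityFin n S) := by
  have hQ : Measurable fun v : Fin n → ℝ => v ⬝ᵥ S⁻¹ *ᵥ v := by
    simp only [dotProduct, Matrix.mulVec]
    exact Finset.measurable_sum _ fun i _ =>
      (measurable_pi_apply i).mul (Finset.measurable_sum _ fun j _ =>
        (measurable_pi_apply j).const_mul _)
  exact measurable_const.mul ((hQ.const_mul _).exp)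

lemma gaussDensityFin_smul {n : ℕ} {S : Matrix (Fin n) (Fin n) ℝ} (hS : S.PosDef)
    {lam : ℝ} (hlam : lam ≠ 0) (u : Fin n → ℝ) :
    gaussDensityFin n (lam ^ 2 • S) u = |lam| ^ (-(n : ℝ)) * gaussDensityFin n S (lam⁻¹ • u) := by
  have hl2 : (lam ^ 2 : ℝ) ≠ 0 := pow_ne_zero 2 hlam
  have h1 : (lam ^ 2 • S).det = (lam ^ 2) ^ n * S.det := by
    rw [Matrix.det_smul]; simp
  have h2 : (lam ^ 2 • S)⁻¹ = (lam ^ 2)⁻¹ • S⁻¹ := by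
    haveI := invertibleOfNonzero hl2
    have := Matrix.inv_smul (A := S) (k := lam ^ 2) (isUnit_iff_ne_zero.mpr hS.det_pos.ne')
    rwa [invOf_eq_inv] at this
  have h3 : u ⬝ᵥ ((lam ^ 2)⁻¹ • S⁻¹) *ᵥ u = (lam ^ 2)⁻¹ * (u ⬝ᵥ S⁻¹ *ᵥ u) := by
    rw [Matrix.smul_mulVec, dotProduct_smul, smul_eq_mul]
  have h4 : (lam⁻¹ • u) ⬝ᵥ S⁻¹ *ᵥ (lam⁻¹ • u) = lam⁻¹ * (lam⁻¹ * (u ⬝ᵥ S⁻¹ *ᵥ u)) := by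
    rw [smul_dotProduct, Matrix.mulVec_smul, dotProduct_smul,
      smul_eq_mul, smul_eq_mul]
  have h5 : ((lam ^ 2) ^ n * S.det : ℝ) ^ (-(1 : ℝ) / 2)
      = |lam| ^ (-(n : ℝ)) * S.det ^ (-(1 : ℝ) / 2) := by
    rw [Real.mul_rpow (by positivity) hS.det_pos.le]
    congr 1
    rw [← sq_abs, ← pow_mul, ← Real.rpow_natCast |lam| (2 * n),
      ← Real.rpow_mul (abs_nonneg lam)]
    congr 1
    push_cast
    ring
  have h6 : (lam ^ 2)⁻¹ * (u ⬝ᵥ S⁻¹ *ᵥ u) = lam⁻¹ * (lam⁻¹ * (u ⬝ᵥ S⁻¹ *ᵥ u)) := by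
    rw [sq, mul_inv]; ring
  unfold gaussDensityFin
  rw [h1, h2, h3, h4, h5, h6]
  ring

/-- The pushforward of the NCP posterior `μᴺ` (with Lebesgue density
proportional to `exp(-(τ/2)‖d - λ H v‖²) φ_Σ(v) p_λ(λ)`) under the reparameterization
`(v, λ) ↦ (λ v, λ)` equals the CP posterior `μ̃ᴺ` (with Lebesgue density proportional
to `exp(-(τ/2)‖H u - d‖²) φ_{λ²Σ}(u) p_λ(λ)`, defined for `λ ≠ 0`). -/
theorem stmt7
    (n Nd : ℕ) (hn : 0 < n) (hNd : 0 < Nd)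
    (S : Matrix (Fin n) (Fin n) ℝ) (hS : S.PosDef)
    (H : Matrix (Fin Nd) (Fin n) ℝ)
    (d : Fin Nd → ℝ) (τ : ℝ) (hτ : 0 < τ)
    (lamBar : ℝ) (σ : ℝ≥0) (hσ : 0 < σ)
    -- the NCP unnormalized density and posterior measure
    (q : (Fin n → ℝ) × ℝ → ℝ)
    (hq : ∀ (v : Fin n → ℝ) (lam : ℝ),
      q (v, lam) = Real.exp (-(τ / 2) * ∑ i, (d i - lam * (H *ᵥ v) i) ^ 2) *
        gaussDensityFin n S v * gaussianPDFReal lamBar σ lam)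
    (μN : Measure ((Fin n → ℝ) × ℝ))
    (hμN : μN = (∫⁻ p, ENNReal.ofReal (q p))⁻¹ •
      volume.withDensity fun p => ENNReal.ofReal (q p))
    -- the CP unnormalized density (defined for `λ ≠ 0`; the set `{λ = 0}` is null)
    (tq : (Fin n → ℝ) × ℝ → ℝ)
    (htq : ∀ (u : Fin n → ℝ) (lam : ℝ), lam ≠ 0 →
      tq (u, lam) = Real.exp (-(τ / 2) * ∑ i, ((H *ᵥ u) i - d i) ^ 2) *
        gaussDensityFin n (lam ^ 2 • S) u * gaussianPDFReal lamBar σ lam)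
    (htq0 : ∀ u : Fin n → ℝ, tq (u, 0) = 0)
    (μtN : Measure ((Fin n → ℝ) × ℝ))
    (hμtN : μtN = (∫⁻ p, ENNReal.ofReal (tq p))⁻¹ •
      volume.withDensity fun p => ENNReal.ofReal (tq p)) :
    μN.map (fun p : (Fin n → ℝ) × ℝ => (p.2 • p.1, p.2)) = μtN := by
  
  classical
  set T : (Fin n → ℝ) × ℝ → (Fin n → ℝ) × ℝ := fun p => (p.2 • p.1, p.2) with hTdef
  -- measurability of T
  have hsm : Measurable fun p : (Fin n → ℝ) × ℝ => p.2 • p.1 := by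
    apply measurable_pi_lambda
    intro i
    simp only [Pi.smul_apply, smul_eq_mul]
    exact measurable_snd.mul ((measurable_pi_apply i).comp measurable_fst)
  have hTm : Measurable T := hsm.prodMk measurable_snd
  -- measurability of matrix-vector products
  have hmv : ∀ i : Fin Nd, Measurable fun v : Fin n → ℝ => (H *ᵥ v) i := by
    intro i
    simp only [Matrix.mulVec, dotProduct]
    exact Finset.measurable_sum _ fun j _ => (measurable_pi_apply j).const_mul _
  -- q as an explicit function
  have hqfun : q = fun p : (Fin n → ℝ) × ℝ =>
      Real.exp (-(τ / 2) * ∑ i, (d i - p.2 * (H *ᵥ p.1) i) ^ 2) *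
        gaussDensityFin n S p.1 * gaussianPDFReal lamBar σ p.2 := by
    funext p
    obtain ⟨v, lam⟩ := p
    exact hq v lam
  have hqm : Measurable q := by
    rw [hqfun]
    refine Measurable.mul (Measurable.mul ?_ ?_) ?_
    · exact (((Finset.measurable_sum _ fun i _ =>
        ((measurable_const.sub (measurable_snd.mul
          ((hmv i).comp measurable_fst))).pow measurable_const)).const_mul _)).exp
    · exact (measurable_gaussDensityFin n S).comp measurable_fst
    · exact (measurable_gaussianPDFReal lamBar σ).comp measurable_snd
  -- tq as an explicit function
  set F : (Fin n → ℝ) × ℝ → ℝ := fun p =>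
    if p.2 = 0 then 0 else
      Real.exp (-(τ / 2) * ∑ i, ((H *ᵥ p.1) i - d i) ^ 2) *
        (|p.2| ^ (-(n : ℝ)) * gaussDensityFin n S (p.2⁻¹ • p.1)) *
        gaussianPDFReal lamBar σ p.2 with hFdef
  have htqF : tq = F := by
    funext p
    obtain ⟨u, lam⟩ := p
    by_cases hlam : lam = 0
    · subst hlam
      simp only [hFdef, if_pos rfl]
      exact htq0 u
    · simp only [hFdef, if_neg hlam]
      rw [htq u lam hlam, gaussDensityFin_smul hS hlam]
  have hinvsm : Measurable fun p : (Fin n → ℝ) × ℝ => p.2⁻¹ • p.1 := by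
    apply measurable_pi_lambda
    intro i
    simp only [Pi.smul_apply, smul_eq_mul]
    exact measurable_snd.inv.mul ((measurable_pi_apply i).comp measurable_fst)
  have hFm : Measurable F := by
    refine Measurable.ite (measurable_snd (measurableSet_singleton 0)) measurable_const ?_
    refine Measurable.mul (Measurable.mul ?_ (Measurable.mul ?_ ?_)) ?_
    · exact ((Finset.measurable_sum _ fun i _ =>
        (((hmv i).comp measurable_fst).sub measurable_const).pow measurable_const).const_mul _).exp
    · exact measurable_snd.abs.pow measurable_const
    · exact (measurable_gaussDensityFin n S).comp hinvsm
    · exact (measurable_gaussianPDFReal lamBar σ).comp measurable_snd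
  have hFnn : ∀ p, 0 ≤ F p := by
    intro p
    simp only [hFdef]
    split
    · exact le_rfl
    · have h1 : (0:ℝ) ≤ |p.2| ^ (-(n : ℝ)) := Real.rpow_nonneg (abs_nonneg _) _
      have h2 := gaussDensityFin_nonneg n hS.det_pos.le (p.2⁻¹ • p.1)
      have h3 := gaussianPDFReal_nonneg lamBar σ p.2
      positivity
  -- change of variables identity
  have key : ∀ (lam : ℝ), lam ≠ 0 → ∀ v : Fin n → ℝ,
      ENNReal.ofReal (q (v, lam)) =
        ENNReal.ofReal (F (lam • v, lam)) * ENNReal.ofReal (|lam| ^ (n : ℝ)) := by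
    intro lam hlam v
    rw [← ENNReal.ofReal_mul (hFnn _)]
    congr 1
    rw [hq v lam]
    simp only [hFdef, if_neg hlam]
    have hHs : H *ᵥ (lam • v) = lam • (H *ᵥ v) := Matrix.mulVec_smul H lam v
    have hvv : lam⁻¹ • (lam • v) = v := by
      rw [smul_smul, inv_mul_cancel₀ hlam, one_smul]
    have hsum : ∑ i, ((H *ᵥ (lam • v)) i - d i) ^ 2
        = ∑ i, (d i - lam * (H *ᵥ v) i) ^ 2 := by
      refine Finset.sum_congr rfl fun i _ => ?_
      rw [hHs]
      simp only [Pi.smul_apply, smul_eq_mul]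
      ring
    have hrp : |lam| ^ (-(n : ℝ)) * |lam| ^ (n : ℝ) = 1 := by
      rw [← Real.rpow_add (abs_pos.mpr hlam)]
      norm_num
    rw [hvv, hsum]
    linear_combination (-(Real.exp (-(τ / 2) * ∑ i, (d i - lam * (H *ᵥ v) i) ^ 2) *
      gaussDensityFin n S v * gaussianPDFReal lamBar σ lam)) * hrp
  -- pushforward of unnormalized measures
  have hν : (volume.withDensity fun p => ENNReal.ofReal (q p)).map T
      = volume.withDensity fun p => ENNReal.ofReal (F p) := by
    ext s hs
    rw [Measure.map_apply hTm hs, withDensity_apply _ (hTm hs), withDensity_apply _ hs,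
      ← lintegral_indicator (hTm hs), ← lintegral_indicator hs]
    have hL : ∀ p, (T ⁻¹' s).indicator (fun p => ENNReal.ofReal (q p)) p
        = s.indicator (fun _ => (1 : ℝ≥0∞)) (T p) * ENNReal.ofReal (q p) := by
      intro p
      by_cases hp : T p ∈ s
      · simp [Set.indicator, Set.mem_preimage, hp]
      · simp [Set.indicator, Set.mem_preimage, hp]
    have hR : ∀ p, s.indicator (fun p => ENNReal.ofReal (F p)) p
        = s.indicator (fun _ => (1 : ℝ≥0∞)) p * ENNReal.ofReal (F p) := by
      intro p
      by_cases hp : p ∈ s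
      · simp [Set.indicator, hp]
      · simp [Set.indicator, hp]
    rw [lintegral_congr hL, lintegral_congr hR]
    have h1m : Measurable fun p : (Fin n → ℝ) × ℝ =>
        s.indicator (fun _ => (1 : ℝ≥0∞)) (T p) * ENNReal.ofReal (q p) :=
      ((measurable_const.indicator hs).comp hTm).mul hqm.ennreal_ofReal
    have h2m : Measurable fun p : (Fin n → ℝ) × ℝ =>
        s.indicator (fun _ => (1 : ℝ≥0∞)) p * ENNReal.ofReal (F p) :=
      (measurable_const.indicator hs).mul hFm.ennreal_ofReal
    rw [Measure.volume_eq_prod, lintegral_prod_symm _ h1m.aemeasurable,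
      lintegral_prod_symm _ h2m.aemeasurable]
    apply lintegral_congr_ae
    have hae : ∀ᵐ lam : ℝ, lam ≠ 0 := by
      have h0 : {a : ℝ | ¬ a ≠ 0} = {0} := by ext a; simp
      rw [ae_iff, h0]
      exact measure_singleton 0
    filter_upwards [hae] with lam hlam
    set Φ : (Fin n → ℝ) → ℝ≥0∞ := fun u =>
      s.indicator (fun _ => (1 : ℝ≥0∞)) (u, lam) * ENNReal.ofReal (F (u, lam)) with hΦdef
    have hΦm : Measurable Φ :=
      ((measurable_const.indicator hs).comp measurable_prodMk_right).mul
        ((hFm.comp measurable_prodMk_right).ennreal_ofReal)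
    have e1 : ∀ v : Fin n → ℝ,
        s.indicator (fun _ => (1 : ℝ≥0∞)) (T (v, lam)) * ENNReal.ofReal (q (v, lam))
          = Φ (lam • v) * ENNReal.ofReal (|lam| ^ (n : ℝ)) := by
      intro v
      rw [key lam hlam v]
      simp only [hΦdef, hTdef]
      ring
    have hcomb : ENNReal.ofReal |(lam ^ n : ℝ)⁻¹| * ENNReal.ofReal (|lam| ^ (n : ℝ)) = 1 := by
      rw [← ENNReal.ofReal_mul (abs_nonneg _)]
      have h2 : |(lam ^ n : ℝ)⁻¹| * |lam| ^ (n : ℝ) = 1 := by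
        rw [Real.rpow_natCast, abs_inv, abs_pow]
        exact inv_mul_cancel₀ (pow_ne_zero n (abs_ne_zero.mpr hlam))
      rw [h2, ENNReal.ofReal_one]
    calc ∫⁻ v, s.indicator (fun _ => (1 : ℝ≥0∞)) (T (v, lam)) * ENNReal.ofReal (q (v, lam))
        = ∫⁻ v, Φ (lam • v) * ENNReal.ofReal (|lam| ^ (n : ℝ)) := lintegral_congr e1
      _ = (∫⁻ v, Φ (lam • v)) * ENNReal.ofReal (|lam| ^ (n : ℝ)) :=
          lintegral_mul_const' _ _ ENNReal.ofReal_ne_top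
      _ = (∫⁻ u, Φ u ∂(Measure.map (lam • ·) volume)) * ENNReal.ofReal (|lam| ^ (n : ℝ)) := by
          rw [lintegral_map hΦm (measurable_const_smul lam)]
      _ = (ENNReal.ofReal |(lam ^ n : ℝ)⁻¹| * ∫⁻ u, Φ u) * ENNReal.ofReal (|lam| ^ (n : ℝ)) := by
          rw [Measure.map_addHaar_smul volume hlam, lintegral_smul_measure]
          congr 3
          · simp [Module.finrank_fin_fun]
      _ = (∫⁻ u, Φ u) *
            (ENNReal.ofReal |(lam ^ n : ℝ)⁻¹| * ENNReal.ofReal (|lam| ^ (n : ℝ))) := by ring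
      _ = ∫⁻ u, Φ u := by rw [hcomb, mul_one]
  -- equality of normalizing constants
  have hmass : (∫⁻ p, ENNReal.ofReal (q p)) = ∫⁻ p, ENNReal.ofReal (F p) := by
    have h1 := congrArg (fun m : Measure ((Fin n → ℝ) × ℝ) => m Set.univ) hν
    rw [Measure.map_apply hTm MeasurableSet.univ, Set.preimage_univ,
      withDensity_apply _ MeasurableSet.univ, withDensity_apply _ MeasurableSet.univ,
      setLIntegral_univ, setLIntegral_univ] at h1
    exact h1
  rw [hμN, hμtN, htqF, Measure.map_smul, hν, hmass]
end
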